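/- Let n be large enough that a level-n harmonic immersion i_n : S² → ℝ^{2n+1} is an immersion. Then for all x, y ∈ S², the orthogonal projection p of the vector i_n(x) − i_n(y) onto the tangent space of the immersed surface at i_n(y) (i.e. onto the range of the manifold derivative of i_n at y) satisfies ‖p‖² = (P_n'(⟨x, y⟩))² (1 − ⟨x, y⟩²) / P_n'(1). -/

import Mathlib

open Real Metric Module
open scoped Manifold RealInnerProductSpace
open scoped ContDiff

instance : Fact (finrank ℝ (EuclideanSpace ℝ (Fin 3)) = 2 + 1) :=
  ⟨finrank_euclideanSpace_fin⟩

/-- The degree-`n` Legendre polynomial, via the Rodrigues formula. -/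
noncomputable def legendre (n : ℕ) (x : ℝ) : ℝ :=
  (1 / (2 ^ n * (n.factorial : ℝ))) * iteratedDeriv n (fun t : ℝ => (t ^ 2 - 1) ^ n) x

/-- The manifold derivative of a map from `S² ⊂ ℝ³` into `ℝ^k`, viewed as a continuous
linear map from the (model) tangent space `ℝ²` to `ℝ^k`. -/
noncomputable def sphereMfderiv2 (k : ℕ)
    (i : sphere (0 : EuclideanSpace ℝ (Fin 3)) 1 → EuclideanSpace ℝ (Fin k))
    (y : sphere (0 : EuclideanSpace ℝ (Fin 3)) 1) :
    EuclideanSpace ℝ (Fin 2) →L[ℝ] EuclideanSpace ℝ (Fin k) :=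
  mfderiv (𝓡 2) 𝓘(ℝ, EuclideanSpace ℝ (Fin k)) i y

lemma legendre_contDiff (n : ℕ) : ContDiff ℝ ∞ (legendre n) := by
  have h : ContDiff ℝ ∞ (fun t : ℝ => (t ^ 2 - 1) ^ n) :=
    ((contDiff_id.pow 2).sub contDiff_const).pow n
  have h2 : ContDiff ℝ ∞ (iteratedDeriv n fun t : ℝ => (t ^ 2 - 1) ^ n) := by
    rw [iteratedDeriv_eq_iterate]; exact h.iterate_deriv n
  exact contDiff_const.mul h2

lemma legendre_deriv_contDiff (n : ℕ) : ContDiff ℝ ∞ (deriv (legendre n)) :=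
  (contDiff_infty_iff_deriv.mp (legendre_contDiff n)).2

lemma legendre_diff (n : ℕ) : Differentiable ℝ (legendre n) :=
  (legendre_contDiff n).differentiable (by simp)

lemma legendre_deriv_diff (n : ℕ) : Differentiable ℝ (deriv (legendre n)) :=
  (legendre_deriv_contDiff n).differentiable (by simp)

local notation "S2" => sphere (0 : EuclideanSpace ℝ (Fin 3)) 1
local notation "E3" => EuclideanSpace ℝ (Fin 3)

/-- mfderiv of `z ↦ ⟪a, f z⟫`. -/
lemma mfderiv_inner_comp (k : ℕ)
    (f : S2 → EuclideanSpace ℝ (Fin k))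
    (hf : ContMDiff (𝓡 2) 𝓘(ℝ, EuclideanSpace ℝ (Fin k)) (⊤ : ℕ∞) f)
    (a : EuclideanSpace ℝ (Fin k)) (y : S2) :
    mfderiv (𝓡 2) 𝓘(ℝ, ℝ) (fun z => ⟪a, f z⟫) y =
      (innerSL ℝ a).comp (sphereMfderiv2 k f y) := by
  have h1 : MDifferentiableAt (𝓡 2) 𝓘(ℝ, EuclideanSpace ℝ (Fin k)) f y :=
    (hf y).mdifferentiableAt (by simp)
  have h2 : MDifferentiableAt 𝓘(ℝ, EuclideanSpace ℝ (Fin k)) 𝓘(ℝ, ℝ) (innerSL ℝ a) (f y) :=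
    ((innerSL ℝ a).differentiableAt).mdifferentiableAt
  have h3 := mfderiv_comp y h2 h1
  have h4 : mfderiv 𝓘(ℝ, EuclideanSpace ℝ (Fin k)) 𝓘(ℝ, ℝ) (innerSL ℝ a) (f y)
      = innerSL ℝ a := by
    rw [mfderiv_eq_fderiv]; exact (innerSL ℝ a).fderiv
  have h5 : (fun z => ⟪a, f z⟫) = (innerSL ℝ a) ∘ f := rfl
  rw [h5, h3, h4]; rfl

/-- mfderiv of `z ↦ φ ↑z`. -/
lemma mfderiv_comp_coe (φ : E3 → ℝ) (y : S2) (hφ : DifferentiableAt ℝ φ (y : E3)) :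
    mfderiv (𝓡 2) 𝓘(ℝ, ℝ) (fun z : S2 => φ (z : E3)) y =
      (fderiv ℝ φ (y : E3)).comp
        (mfderiv (𝓡 2) 𝓘(ℝ, E3) ((↑) : S2 → E3) y) := by
  have h1 : MDifferentiableAt (𝓡 2) 𝓘(ℝ, E3) ((↑) : S2 → E3) y :=
    (contMDiff_coe_sphere (m := 1) y).mdifferentiableAt one_ne_zero
  have h2 : MDifferentiableAt 𝓘(ℝ, E3) 𝓘(ℝ, ℝ) φ ((y : E3)) :=
    hφ.mdifferentiableAt
  have h3 := mfderiv_comp y h2 h1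
  rw [show (fun z : S2 => φ (z : E3)) = φ ∘ ((↑) : S2 → E3) from rfl, h3, mfderiv_eq_fderiv]
  rfl

/-- For a level-`n` harmonic immersion `i_n : S² → ℝ^{2n+1}`, the orthogonal projection `p`
of `i_n x − i_n y` onto the tangent space at `i_n y` (the range of the manifold derivative of
`i_n` at `y`) satisfies `‖p‖² = P_n'(⟨x,y⟩)² (1 − ⟨x,y⟩²)/P_n'(1)`. -/
theorem norm_sq_tangential_projection (n : ℕ)
    (i : sphere (0 : EuclideanSpace ℝ (Fin 3)) 1 → EuclideanSpace ℝ (Fin (2 * n + 1)))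
    (hsmooth : ContMDiff (𝓡 2) 𝓘(ℝ, EuclideanSpace ℝ (Fin (2 * n + 1))) (⊤ : ℕ∞) i)
    (hkernel : ∀ x y : sphere (0 : EuclideanSpace ℝ (Fin 3)) 1,
      ⟪i x, i y⟫ = legendre n ⟪(x : EuclideanSpace ℝ (Fin 3)), (y : EuclideanSpace ℝ (Fin 3))⟫)
    (himm : ∀ y : sphere (0 : EuclideanSpace ℝ (Fin 3)) 1,
      Function.Injective (sphereMfderiv2 (2 * n + 1) i y)) :
    ∀ x y : sphere (0 : EuclideanSpace ℝ (Fin 3)) 1,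
      ‖(Submodule.orthogonalProjectionOnto (LinearMap.range (sphereMfderiv2 (2 * n + 1) i y :
            EuclideanSpace ℝ (Fin 2) →ₗ[ℝ] EuclideanSpace ℝ (Fin (2 * n + 1))))
          (i x - i y) : EuclideanSpace ℝ (Fin (2 * n + 1)))‖ ^ 2 =
        (deriv (legendre n) ⟪(x : EuclideanSpace ℝ (Fin 3)), (y : EuclideanSpace ℝ (Fin 3))⟫) ^ 2 *
          (1 - ⟪(x : EuclideanSpace ℝ (Fin 3)), (y : EuclideanSpace ℝ (Fin 3))⟫ ^ 2) /
          deriv (legendre n) 1 := by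
  -- Claim A: first-derivative identity
  have claimA : ∀ (x' y' : S2) (v : EuclideanSpace ℝ (Fin 2)),
      ⟪i x', sphereMfderiv2 (2*n+1) i y' v⟫ =
        deriv (legendre n) ⟪(x' : E3), (y' : E3)⟫ *
          ⟪(x' : E3), mfderiv (𝓡 2) 𝓘(ℝ, E3) ((↑) : S2 → E3) y' v⟫ := by
    intro x' y' v
    have hfun : (fun z : S2 => ⟪i x', i z⟫)
        = (fun z : S2 => (fun c : E3 => legendre n (innerSL ℝ (x' : E3) c)) (z : E3)) := by
      funext z; rw [hkernel x' z]; rfl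
    have hφ : ∀ c : E3, HasFDerivAt (fun c : E3 => legendre n (innerSL ℝ (x' : E3) c))
        (deriv (legendre n) (innerSL ℝ (x' : E3) c) • (innerSL ℝ (x' : E3))) c := fun c =>
      ((legendre_diff n _).hasDerivAt).comp_hasFDerivAt c (innerSL ℝ (x' : E3)).hasFDerivAt
    have heq : (innerSL ℝ (i x')).comp (sphereMfderiv2 (2*n+1) i y')
        = ((deriv (legendre n) (innerSL ℝ (x' : E3) (y' : E3)) • innerSL ℝ (x' : E3))).comp
            (mfderiv (𝓡 2) 𝓘(ℝ, E3) ((↑) : S2 → E3) y') := by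
      rw [← mfderiv_inner_comp (2*n+1) i hsmooth (i x') y', hfun,
        mfderiv_comp_coe _ y' (hφ _).differentiableAt, (hφ _).fderiv]
    exact ContinuousLinearMap.ext_iff.mp heq v
  intro x y
  obtain ⟨J, hJdef⟩ : ∃ J : EuclideanSpace ℝ (Fin 2) →L[ℝ] E3,
      J = mfderiv (𝓡 2) 𝓘(ℝ, E3) ((↑) : S2 → E3) y := ⟨_, rfl⟩
  set t : ℝ := ⟪(x : E3), (y : E3)⟫ with ht
  set D := sphereMfderiv2 (2 * n + 1) i y with hD
  have hyy : ⟪(y : E3), (y : E3)⟫ = 1 := by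
    rw [real_inner_self_eq_norm_sq, mem_sphere_zero_iff_norm.mp y.2]; norm_num
  have hxx : ⟪(x : E3), (x : E3)⟫ = 1 := by
    rw [real_inner_self_eq_norm_sq, mem_sphere_zero_iff_norm.mp x.2]; norm_num
  have hrange : LinearMap.range (J : EuclideanSpace ℝ (Fin 2) →ₗ[ℝ] E3) = (ℝ ∙ (y : E3))ᗮ := by
    rw [hJdef]; exact range_mfderiv_coe_sphere (n := 2) y
  have hJy : ∀ w, ⟪(y : E3), J w⟫ = 0 := by
    intro w
    have hmem : J w ∈ LinearMap.range (J : EuclideanSpace ℝ (Fin 2) →ₗ[ℝ] E3) := LinearMap.mem_range_self _ w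
    rw [hrange] at hmem
    exact (Submodule.mem_orthogonal _ _).mp hmem _ (Submodule.mem_span_singleton_self _)
  have hA : ∀ (x' : S2) (v : EuclideanSpace ℝ (Fin 2)),
      ⟪i x', D v⟫ = deriv (legendre n) ⟪(x' : E3), (y : E3)⟫ * ⟪(x' : E3), J v⟫ := by
    intro x' v; rw [hD, hJdef]; exact claimA x' y v
  have hiy : ∀ v, ⟪i y, D v⟫ = 0 := by
    intro v; rw [hA y v, hJy v]; ring
  -- Claim B: the metric identity
  have claimB : ∀ v w, ⟪D v, D w⟫ = deriv (legendre n) 1 * ⟪J v, J w⟫ := by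
    intro v w
    set φ2 : E3 → ℝ := fun c =>
      deriv (legendre n) (innerSL ℝ (y : E3) c) * innerSL ℝ (J v) c with hφ2
    have hfun : (fun z : S2 => ⟪D v, i z⟫) = (fun z : S2 => φ2 (z : E3)) := by
      funext z
      rw [real_inner_comm, hA z v, hφ2]
      simp only [innerSL_apply_apply]
      rw [real_inner_comm (y : E3) (z : E3), real_inner_comm (J v) (z : E3)]
    have hder1 : HasFDerivAt (fun c : E3 => deriv (legendre n) (innerSL ℝ (y : E3) c))
        (deriv (deriv (legendre n)) (innerSL ℝ (y : E3) (y : E3)) • innerSL ℝ (y : E3))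
        (y : E3) :=
      ((legendre_deriv_diff n _).hasDerivAt).comp_hasFDerivAt _ (innerSL ℝ (y : E3)).hasFDerivAt
    have hder2 : HasFDerivAt (fun c : E3 => innerSL ℝ (J v) c) (innerSL ℝ (J v)) (y : E3) :=
      (innerSL ℝ (J v)).hasFDerivAt
    have hder := hder1.mul hder2
    have heq : (innerSL ℝ (D v)).comp D = (fderiv ℝ φ2 (y : E3)).comp J := by
      rw [hD, ← mfderiv_inner_comp (2*n+1) i hsmooth (D v) y, hfun,
        mfderiv_comp_coe φ2 y hder.differentiableAt, hφ2, hJdef]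
      rfl
    have h := ContinuousLinearMap.ext_iff.mp heq w
    rw [show fderiv ℝ φ2 (y : E3) = _ from hder.fderiv] at h
    simp only [ContinuousLinearMap.coe_comp', Function.comp_apply, innerSL_apply_apply,
      ContinuousLinearMap.add_apply, ContinuousLinearMap.smul_apply, smul_eq_mul] at h
    have h2 : ⟪J v, (y : E3)⟫ = 0 := by rw [real_inner_comm]; exact hJy v
    rw [h, hJy w, h2, hyy]
    ring
  -- `P_n'(1) ≠ 0`
  have hP1 : deriv (legendre n) 1 ≠ 0 := by
    intro h0
    have hv : (EuclideanSpace.single (0 : Fin 2) (1 : ℝ)) ≠ 0 := by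
      intro hc
      have := congrArg (fun v : EuclideanSpace ℝ (Fin 2) => v 0) hc
      simp [EuclideanSpace.single_apply] at this
    have hDv : D (EuclideanSpace.single (0 : Fin 2) (1 : ℝ)) ≠ 0 := by
      intro hc
      exact hv (himm y (by rw [hc, map_zero]))
    have : ⟪D (EuclideanSpace.single (0 : Fin 2) (1:ℝ)),
        D (EuclideanSpace.single (0 : Fin 2) (1:ℝ))⟫ = 0 := by
      rw [claimB, h0, zero_mul]
    exact hDv (inner_self_eq_zero.mp this)
  -- the tangential component of x
  have htyx : ⟪(y : E3), (x : E3)⟫ = t := by rw [ht]; exact real_inner_comm _ _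
  set x3 : E3 := (x : E3) - t • (y : E3) with hx3
  have hx3mem : x3 ∈ (ℝ ∙ (y : E3))ᗮ := by
    rw [Submodule.mem_orthogonal]
    intro u hu
    obtain ⟨c, rfl⟩ := Submodule.mem_span_singleton.mp hu
    rw [hx3, real_inner_smul_left, inner_sub_right, real_inner_smul_right, hyy, htyx]
    ring
  obtain ⟨v0, hv0⟩ : ∃ v0, J v0 = x3 := by
    have hx3r : x3 ∈ LinearMap.range (J : EuclideanSpace ℝ (Fin 2) →ₗ[ℝ] E3) := by rw [hrange]; exact hx3mem
    exact LinearMap.mem_range.mp hx3r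
  set p : EuclideanSpace ℝ (Fin (2 * n + 1)) :=
    (deriv (legendre n) t / deriv (legendre n) 1) • D v0 with hp
  have hpmem : p ∈ LinearMap.range (D : EuclideanSpace ℝ (Fin 2) →ₗ[ℝ] EuclideanSpace ℝ (Fin (2 * n + 1))) :=
    Submodule.smul_mem _ _ (LinearMap.mem_range_self _ v0)
  have hxw : ∀ w, ⟪(x : E3), J w⟫ = ⟪x3, J w⟫ + t * ⟪(y : E3), J w⟫ := by
    intro w
    rw [hx3, inner_sub_left, real_inner_smul_left]; ring
  have hproj : (Submodule.orthogonalProjectionOnto (LinearMap.range (D : EuclideanSpace ℝ (Fin 2) →ₗ[ℝ] EuclideanSpace ℝ (Fin (2 * n + 1)))) (i x - i y) :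
      EuclideanSpace ℝ (Fin (2 * n + 1))) = p := by
    rw [← Submodule.starProjection_apply]
    apply Submodule.eq_starProjection_of_mem_of_inner_eq_zero hpmem
    rintro w ⟨w', rfl⟩
    change ⟪i x - i y - p, D w'⟫ = 0
    rw [inner_sub_left, inner_sub_left, hiy w', hp, real_inner_smul_left, claimB v0 w', hv0,
      hA x w', hxw w', hJy w', ← ht]
    field_simp
    ring
  rw [hproj, hp]
  have hDv0 : ‖D v0‖ ^ 2 = deriv (legendre n) 1 * (1 - t ^ 2) := by
    rw [← real_inner_self_eq_norm_sq, claimB v0 v0, hv0]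
    congr 1
    rw [hx3, inner_sub_left, inner_sub_right, inner_sub_right, real_inner_smul_left,
      real_inner_smul_left, real_inner_smul_right, real_inner_smul_right, hxx, hyy, htyx, ← ht]
    ring
  rw [norm_smul, mul_pow, hDv0, Real.norm_eq_abs, sq_abs]
  field_simp
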